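/- The entry of the inverse of the confluent Vandermonde matrix $V(\overline{A})$ in row indexed by $(i,j)$ (the $j$-th column of the block of $\alpha_i$, $0\le j<d_i$) and last column (column $d$) equals $\frac{1}{(d_i-1-j)!}\big(\frac{1}{\overline{f}_i}\big)^{(d_i-1-j)}(\alpha_i)$; in particular the row corresponding to $(i,0)$ gives $\frac{1}{(d_i-1)!}(1/\overline{f}_i)^{(d_i-1)}(\alpha_i)$. -/

import Mathlib

open Finset

/-- Entry helper for the confluent Vandermonde matrix: `binom(k,j) * a^(k-j)`,
with the convention that it is `0` when `k < j`. -/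
def dcoef {K : Type*} [CommRing K] (k j : ℕ) (a : K) : K :=
  if j ≤ k then (k.choose j : K) * a ^ (k - j) else 0

/-- The position in `Fin (∑ i, d i)` of the `j`-th column of the `i`-th block. -/
def sigmaToFin {m : ℕ} (d : Fin m → ℕ) (p : Σ i, Fin (d i)) : Fin (∑ i, d i) :=
  ⟨∑ i ∈ Finset.univ.filter (fun i => i < p.1), d i + (p.2 : ℕ), by
    have h1 : (p.2 : ℕ) < d p.1 := p.2.isLt
    have h2 : d p.1 + ∑ i ∈ Finset.univ.filter (fun i => i < p.1), d i ≤ ∑ i, d i := by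
      rw [← Finset.sum_insert (by simp)]
      exact Finset.sum_le_sum_of_subset (Finset.subset_univ _)
    omega⟩

/-- The square confluent (generalized Vandermonde) matrix of points `α i` with
multiplicities `d i`. -/
def confVdm {K : Type*} [CommRing K] {m : ℕ} (α : Fin m → K) (d : Fin m → ℕ) :
    Matrix (Fin (∑ i, d i)) (Fin (∑ i, d i)) K :=
  Matrix.of fun k c =>
    ∑ p : Σ i, Fin (d i),
      if (sigmaToFin d p : ℕ) = (c : ℕ) then dcoef (k : ℕ) (p.2 : ℕ) (α p.1) else 0


open Polynomial Topology

open Polynomial Topology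

lemma contDiff_eval (p : ℝ[X]) : ContDiff ℝ ⊤ fun x : ℝ => p.eval x := by
  induction p using Polynomial.induction_on' with
  | add p q hp hq => simpa [eval_add] using hp.add hq
  | monomial n a => simpa [eval_monomial] using contDiff_const.mul (contDiff_id.pow n)

lemma iteratedDeriv_eval (p : ℝ[X]) (n : ℕ) :
    iteratedDeriv n (fun x : ℝ => p.eval x) = fun x => (derivative^[n] p).eval x := by
  induction n with
  | zero => simp
  | succ n ih =>
    rw [iteratedDeriv_succ, ih]
    funext x
    rw [Function.iterate_succ_apply']
    exact Polynomial.deriv _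

lemma iteratedDerivWithin_of_isOpen' {f : ℝ → ℝ} {s : Set ℝ} {x : ℝ} (n : ℕ)
    (hs : IsOpen s) (hx : x ∈ s) : iteratedDerivWithin n f s x = iteratedDeriv n f x := by
  rw [iteratedDerivWithin_eq_iteratedFDerivWithin, iteratedDeriv_eq_iteratedFDeriv,
    iteratedFDerivWithin_of_isOpen n hs hx]

lemma vanish {a : ℝ} {s : Set ℝ} (hs : IsOpen s) (ha : a ∈ s) :
    ∀ (n N : ℕ) (ψ : ℝ → ℝ), ContDiffOn ℝ ⊤ ψ s → n < N →
      iteratedDeriv n (fun x => (x - a) ^ N * ψ x) a = 0 := by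
  intro n
  induction n with
  | zero =>
    intro N ψ hψ hN
    simp only [iteratedDeriv_zero, sub_self, zero_pow (by omega : N ≠ 0), zero_mul]
  | succ n ih =>
    rintro (_ | M) ψ hψ hN
    · omega
    rw [iteratedDeriv_succ']
    have hψ' : ContDiffOn ℝ ⊤ (fun x => ((M : ℝ) + 1) * ψ x + (x - a) * deriv ψ x) s := by
      apply (contDiffOn_const.mul hψ).add
      exact (contDiffOn_id.sub contDiffOn_const).mul (hψ.deriv_of_isOpen hs le_top)
    have heq : (deriv fun x => (x - a) ^ (M + 1) * ψ x) =ᶠ[𝓝 a]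
        fun x => (x - a) ^ M * (((M : ℝ) + 1) * ψ x + (x - a) * deriv ψ x) := by
      filter_upwards [hs.mem_nhds ha] with x hx
      have hdψ : DifferentiableAt ℝ ψ x :=
        (hψ.contDiffAt (hs.mem_nhds hx)).differentiableAt (by simp)
      have hdp : DifferentiableAt ℝ (fun x : ℝ => (x - a) ^ (M + 1)) x :=
        ((differentiableAt_id.sub_const a).pow _)
      rw [deriv_fun_mul hdp hdψ]
      have h1 : deriv (fun x : ℝ => (x - a) ^ (M + 1)) x = ((M : ℝ) + 1) * (x - a) ^ M := by
        have h2 : HasDerivAt (fun x : ℝ => (x - a) ^ (M + 1))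
            ((((M + 1 : ℕ)) : ℝ) * (x - a) ^ (M + 1 - 1) * 1) x :=
          (((hasDerivAt_id x).sub_const a).pow (M + 1))
        rw [h2.deriv]; push_cast; ring
      rw [h1]; ring
    rw [heq.iteratedDeriv_eq]
    exact ih M _ hψ' (by omega)

lemma iteratedDeriv_inv_eval (f u : ℝ[X]) (a : ℝ) (N : ℕ) (hf : f.eval a ≠ 0)
    (hu : ((X - C a) ^ N : ℝ[X]) ∣ u * f - 1) (n : ℕ) (hn : n < N) :
    iteratedDeriv n (fun x : ℝ => (f.eval x)⁻¹) a = (derivative^[n] u).eval a := by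
  obtain ⟨r, hr⟩ := hu
  set s : Set ℝ := {x | f.eval x ≠ 0} with hsdef
  have hs : IsOpen s := isOpen_ne.preimage f.continuous
  have ha : a ∈ s := hf
  have hinv : ContDiffOn ℝ ⊤ (fun x => (f.eval x)⁻¹) s :=
    (contDiff_eval f).contDiffOn.inv fun x hx => hx
  set ψ : ℝ → ℝ := fun x => -(r.eval x * (f.eval x)⁻¹) with hψdef
  have hψ : ContDiffOn ℝ ⊤ ψ s := ((contDiff_eval r).contDiffOn.mul hinv).neg
  have hEq : Set.EqOn (fun x => (f.eval x)⁻¹)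
      (fun x => u.eval x + (x - a) ^ N * ψ x) s := by
    intro x hx
    have hx' : f.eval x ≠ 0 := hx
    have hev : u.eval x * f.eval x - 1 = (x - a) ^ N * r.eval x := by
      have := congrArg (eval x) hr
      simpa using this
    simp only [hψdef]
    field_simp
    linear_combination -hev
  calc iteratedDeriv n (fun x => (f.eval x)⁻¹) a
      = iteratedDerivWithin n (fun x => (f.eval x)⁻¹) s a :=
        (iteratedDerivWithin_of_isOpen' n hs ha).symm
    _ = iteratedDerivWithin n (fun x => u.eval x + (x - a) ^ N * ψ x) s a :=
        iteratedDerivWithin_congr hEq ha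
    _ = iteratedDerivWithin n ((fun x => u.eval x) + fun x => (x - a) ^ N * ψ x) s a := rfl
    _ = iteratedDerivWithin n (fun x => u.eval x) s a
        + iteratedDerivWithin n (fun x => (x - a) ^ N * ψ x) s a := by
        apply iteratedDerivWithin_add ha hs.uniqueDiffOn
        · exact ((contDiff_eval u).contDiffOn.of_le le_top).contDiffWithinAt ha
        · exact (((((contDiff_id.sub contDiff_const).pow N).contDiffOn).mul hψ).of_le le_top).contDiffWithinAt ha
    _ = (derivative^[n] u).eval a := by
        rw [iteratedDerivWithin_of_isOpen' n hs ha, iteratedDerivWithin_of_isOpen' n hs ha,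
          iteratedDeriv_eval, vanish hs ha n N ψ hψ hn, add_zero]


lemma dcoef_eq {K : Type*} [CommRing K] (k j : ℕ) (a : K) :
    dcoef k j a = (k.choose j : K) * a ^ (k - j) := by
  unfold dcoef
  split
  · rfl
  · rw [Nat.choose_eq_zero_of_lt (by omega)]; simp

lemma sigmaToFin_injective {m : ℕ} (d : Fin m → ℕ) : Function.Injective (sigmaToFin d) := by
  have key : ∀ i i' : Fin m, i < i' →
      ∑ ℓ ∈ Finset.univ.filter (fun ℓ => ℓ < i), d ℓ + d i ≤
        ∑ ℓ ∈ Finset.univ.filter (fun ℓ => ℓ < i'), d ℓ := by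
    intro i i' h
    have hsub : insert i (Finset.univ.filter (fun ℓ => ℓ < i)) ⊆
        Finset.univ.filter (fun ℓ => ℓ < i') := by
      intro ℓ hℓ
      simp only [Finset.mem_insert, Finset.mem_filter, Finset.mem_univ, true_and] at hℓ ⊢
      rcases hℓ with rfl | hℓ
      · exact h
      · exact lt_trans hℓ h
    calc ∑ ℓ ∈ Finset.univ.filter (fun ℓ => ℓ < i), d ℓ + d i
        = ∑ ℓ ∈ insert i (Finset.univ.filter (fun ℓ => ℓ < i)), d ℓ := by
          rw [Finset.sum_insert (by simp), add_comm]
      _ ≤ _ := Finset.sum_le_sum_of_subset hsub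
  rintro ⟨i, j⟩ ⟨i', j'⟩ hpq
  have hval : ∑ ℓ ∈ Finset.univ.filter (fun ℓ => ℓ < i), d ℓ + (j : ℕ) =
      ∑ ℓ ∈ Finset.univ.filter (fun ℓ => ℓ < i'), d ℓ + (j' : ℕ) := congrArg Fin.val hpq
  rcases lt_trichotomy i i' with h | h | h
  · have := key i i' h
    have := j.isLt
    omega
  · subst h
    have : j = j' := Fin.ext (by omega)
    rw [this]
  · have := key i' i h
    have := j'.isLt
    omega

noncomputable def sigmaEquiv {m : ℕ} (d : Fin m → ℕ) : (Σ i, Fin (d i)) ≃ Fin (∑ i, d i) :=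
  Equiv.ofBijective (sigmaToFin d)
    ((Fintype.bijective_iff_injective_and_card _).mpr
      ⟨sigmaToFin_injective d, by simp [Fintype.card_sigma]⟩)

lemma confVdm_apply {K : Type*} [CommRing K] {m : ℕ} (α : Fin m → K) (d : Fin m → ℕ)
    (k : Fin (∑ i, d i)) (p : Σ i, Fin (d i)) :
    confVdm α d k (sigmaToFin d p) = dcoef (k : ℕ) (p.2 : ℕ) (α p.1) := by
  unfold confVdm
  rw [Matrix.of_apply, Finset.sum_eq_single p]
  · rw [if_pos rfl]
  · intro q _ hq
    rw [if_neg]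
    intro h
    exact hq (sigmaToFin_injective d (Fin.ext h))
  · intro h
    exact absurd (Finset.mem_univ p) h

lemma coeff_mul_top {g p : ℝ[X]} {D e : ℕ} (hp : p.Monic) (hD : p.natDegree = D)
    (hg : g.natDegree ≤ e) : (p * g).coeff (D + e) = g.coeff e := by
  rw [Polynomial.coeff_mul, Finset.sum_eq_single (D, e)]
  · rw [← hD, Polynomial.Monic.coeff_natDegree hp, one_mul]
  · rintro ⟨x, y⟩ hmem hne
    rw [Finset.HasAntidiagonal.mem_antidiagonal] at hmem
    rcases lt_trichotomy x D with h | h | h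
    · have : e < y := by omega
      rw [Polynomial.coeff_eq_zero_of_natDegree_lt (lt_of_le_of_lt hg this), mul_zero]
    · exfalso; apply hne; simp only [Prod.mk.injEq]; omega
    · rw [Polynomial.coeff_eq_zero_of_natDegree_lt (by omega), zero_mul]
  · intro h
    exact absurd (by simp : ((D, e) : ℕ × ℕ) ∈ Finset.HasAntidiagonal.antidiagonal (D + e)) h

lemma taylor_coeff_top {g : ℝ[X]} {e : ℕ} (r : ℝ) (hg : g.natDegree ≤ e) :
    (Polynomial.taylor r g).coeff e = g.coeff e := by
  rw [Polynomial.taylor_coeff, Polynomial.hasseDeriv_apply, Polynomial.eval_sum]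
  rw [Polynomial.sum_def]
  rw [Finset.sum_eq_single e]
  · rw [Polynomial.eval_monomial, Nat.choose_self, Nat.sub_self, pow_zero, mul_one,
      Nat.cast_one, one_mul]
  · intro i hi hne
    have hle : i ≤ e := le_trans (Polynomial.le_natDegree_of_mem_supp i hi) hg
    rw [Polynomial.eval_monomial, Nat.choose_eq_zero_of_lt (by omega), Nat.cast_zero, zero_mul,
      zero_mul]
  · intro h
    simp [Polynomial.notMem_support_iff.mp h]

lemma taylor_pow (r : ℝ) (p : ℝ[X]) (n : ℕ) :
    Polynomial.taylor r (p ^ n) = (Polynomial.taylor r p) ^ n := by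
  induction n with
  | zero => simp
  | succ n ih => rw [pow_succ, Polynomial.taylor_mul, ih, pow_succ]

lemma taylor_X_sub_C_self (r : ℝ) : Polynomial.taylor r (X - C r) = X := by
  rw [map_sub, Polynomial.taylor_X, Polynomial.taylor_C]
  ring

lemma sum_coeff_dcoef (q : ℝ[X]) (D : ℕ) (hq : q.natDegree < D) (j' : ℕ) (a : ℝ) :
    ∑ k ∈ Finset.range D, q.coeff k * dcoef k j' a = (Polynomial.taylor a q).coeff j' := by
  rw [Polynomial.taylor_coeff, Polynomial.hasseDeriv_apply, Polynomial.eval_sum,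
    Polynomial.sum_def, ← Finset.sum_subset (Polynomial.supp_subset_range hq)]
  · apply Finset.sum_congr rfl
    intro k _
    rw [Polynomial.eval_monomial, dcoef_eq]
    ring
  · intro k _ hk'
    simp [Polynomial.notMem_support_iff.mp hk']

set_option maxHeartbeats 2000000 in
/-- The entry of `V(Ā)⁻¹` in the row indexed by the pair `(i,j)` (the `j`-th column of
the block of `αᵢ`) and the last column equals
`(1/(dᵢ-1-j)!) (1/f̄ᵢ)^{(dᵢ-1-j)}(αᵢ)`, where `f̄ᵢ(x) = ∏_{ℓ≠i} (x-α_ℓ)^{d_ℓ}`. -/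
theorem confVdm_inv_last_col {m : ℕ} (α : Fin m → ℝ) (hα : Function.Injective α)
    (dd : Fin m → ℕ) (hdd : ∀ ℓ, 1 ≤ dd ℓ) (hpos : 0 < ∑ ℓ, dd ℓ)
    (i : Fin m) (j : Fin (dd i)) :
    (confVdm α dd)⁻¹ (sigmaToFin dd ⟨i, j⟩) ⟨(∑ ℓ, dd ℓ) - 1, by omega⟩ =
      ((dd i - 1 - (j : ℕ)).factorial : ℝ)⁻¹ *
        iteratedDeriv (dd i - 1 - (j : ℕ))
          (fun x : ℝ => (∏ ℓ ∈ Finset.univ.erase i, (x - α ℓ) ^ (dd ℓ))⁻¹) (α i) := by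
  classical
  -- basic notation
  set fbar : Fin m → ℝ[X] :=
    fun i => ∏ ℓ ∈ Finset.univ.erase i, (X - C (α ℓ)) ^ (dd ℓ) with hfbar
  -- coprimality and the Bezout inverse
  have hcop : ∀ i : Fin m, IsCoprime ((X - C (α i)) ^ (dd i)) (fbar i) := by
    intro i
    apply IsCoprime.pow_left
    apply IsCoprime.prod_right
    intro ℓ hℓ
    have hne : i ≠ ℓ := fun h => (Finset.mem_erase.mp hℓ).1 h.symm
    exact (Polynomial.pairwise_coprime_X_sub_C hα hne).pow_right
  choose A u hAu using fun i => (hcop i)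
  have hdvd1 : ∀ i : Fin m, ((X - C (α i)) ^ (dd i) : ℝ[X]) ∣ u i * fbar i - 1 := by
    intro i
    exact ⟨-A i, by linear_combination hAu i⟩
  -- the dual basis polynomials
  set g : (Σ i : Fin m, Fin (dd i)) → ℝ[X] :=
    fun p => ((X - C (α p.1)) ^ (p.2 : ℕ) * u p.1) %ₘ ((X - C (α p.1)) ^ (dd p.1)) with hg
  set Q : (Σ i : Fin m, Fin (dd i)) → ℝ[X] := fun p => fbar p.1 * g p with hQ
  have hmon : ∀ i : Fin m, ((X - C (α i)) ^ (dd i) : ℝ[X]).Monic :=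
    fun i => (Polynomial.monic_X_sub_C _).pow _
  have hmondeg : ∀ i : Fin m, ((X - C (α i)) ^ (dd i) : ℝ[X]).natDegree = dd i := by
    intro i
    rw [Polynomial.natDegree_pow, Polynomial.natDegree_X_sub_C, mul_one]
  have hfbarmon : ∀ i : Fin m, (fbar i).Monic := by
    intro i
    exact Polynomial.monic_prod_of_monic _ _ fun ℓ _ => (Polynomial.monic_X_sub_C _).pow _
  have hfbardeg : ∀ i : Fin m, (fbar i).natDegree + dd i = ∑ ℓ, dd ℓ := by
    intro i
    rw [hfbar]
    rw [Polynomial.natDegree_prod_of_monic _ _ fun ℓ _ => (Polynomial.monic_X_sub_C _).pow _]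
    have : ∀ ℓ ∈ Finset.univ.erase i, ((X - C (α ℓ)) ^ (dd ℓ) : ℝ[X]).natDegree = dd ℓ :=
      fun ℓ _ => hmondeg ℓ
    rw [Finset.sum_congr rfl this, Finset.sum_erase_add _ _ (Finset.mem_univ i)]
  have hgdeg : ∀ p : Σ i : Fin m, Fin (dd i), (g p).natDegree < dd p.1 := by
    intro p
    have hne1 : ((X - C (α p.1)) ^ (dd p.1) : ℝ[X]) ≠ 1 := by
      intro h
      have := hmondeg p.1
      rw [h, Polynomial.natDegree_one] at this
      have := hdd p.1
      omega
    have := Polynomial.natDegree_modByMonic_lt ((X - C (α p.1)) ^ (p.2 : ℕ) * u p.1)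
      (hmon p.1) hne1
    rwa [hmondeg] at this
  have hQdeg : ∀ p : Σ i : Fin m, Fin (dd i), (Q p).natDegree < ∑ ℓ, dd ℓ := by
    intro p
    have h1 := Polynomial.natDegree_mul_le (p := fbar p.1) (q := g p)
    have h2 := hfbardeg p.1
    have h3 := hgdeg p
    have h4 := hdd p.1
    show (fbar p.1 * g p).natDegree < _
    omega
  -- key congruence mod (X - C (α i))^(dd i)
  have hmodg : ∀ p : Σ i : Fin m, Fin (dd i),
      ((X - C (α p.1)) ^ (dd p.1) : ℝ[X]) ∣ g p - (X - C (α p.1)) ^ (p.2 : ℕ) * u p.1 := by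
    intro p
    refine ⟨-(((X - C (α p.1)) ^ (p.2 : ℕ) * u p.1) /ₘ ((X - C (α p.1)) ^ (dd p.1))), ?_⟩
    have := Polynomial.modByMonic_add_div ((X - C (α p.1)) ^ (p.2 : ℕ) * u p.1) ((X - C (α p.1)) ^ (dd p.1))
    linear_combination this
  have hkey : ∀ p : Σ i : Fin m, Fin (dd i),
      ((X - C (α p.1)) ^ (dd p.1) : ℝ[X]) ∣ Q p - (X - C (α p.1)) ^ (p.2 : ℕ) := by
    intro p
    have h2 : Q p - (X - C (α p.1)) ^ (p.2 : ℕ) =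
        fbar p.1 * (g p - (X - C (α p.1)) ^ (p.2 : ℕ) * u p.1) +
          (X - C (α p.1)) ^ (p.2 : ℕ) * (u p.1 * fbar p.1 - 1) := by
      rw [hQ]; ring
    rw [h2]
    exact dvd_add ((hmodg p).mul_left _) ((hdvd1 p.1).mul_left _)
  -- Taylor coefficients of Q (the interpolation conditions)
  have htay : ∀ (p : Σ i : Fin m, Fin (dd i)) (i' : Fin m) (j' : Fin (dd i')),
      (Polynomial.taylor (α i') (Q p)).coeff (j' : ℕ) =
        if p = ⟨i', j'⟩ then 1 else 0 := by
    rintro ⟨i₀, j₀⟩ i' j'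
    by_cases hii : i' = i₀
    · subst hii
      obtain ⟨w, hw⟩ := hkey ⟨i', j₀⟩
      have hQw : Q ⟨i', j₀⟩ = (X - C (α i')) ^ (j₀ : ℕ) + (X - C (α i')) ^ (dd i') * w := by
        linear_combination hw
      rw [hQw, map_add, Polynomial.taylor_mul, _root_.taylor_pow, _root_.taylor_pow, taylor_X_sub_C_self,
        Polynomial.coeff_add, Polynomial.coeff_X_pow, mul_comm,
        Polynomial.coeff_mul_X_pow', if_neg (not_le.mpr j'.isLt), add_zero]
      by_cases hjj : (j' : ℕ) = (j₀ : ℕ)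
      · rw [if_pos hjj, if_pos]
        have : j₀ = j' := Fin.ext hjj.symm
        rw [this]
      · rw [if_neg hjj, if_neg]
        intro h
        have h1 : j₀ = j' := by
          have := (Sigma.mk.inj_iff.mp h).2
          exact eq_of_heq this
        exact hjj (by rw [h1])
    · have hd : ((X - C (α i')) ^ (dd i') : ℝ[X]) ∣ Q ⟨i₀, j₀⟩ := by
        apply dvd_mul_of_dvd_left
        exact Finset.dvd_prod_of_mem _ (Finset.mem_erase.mpr ⟨hii, Finset.mem_univ _⟩)
      obtain ⟨w, hw⟩ := hd
      rw [hw, Polynomial.taylor_mul, _root_.taylor_pow, taylor_X_sub_C_self, mul_comm,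
        Polynomial.coeff_mul_X_pow', if_neg (not_le.mpr j'.isLt), if_neg]
      intro h
      exact hii ((Sigma.mk.inj_iff.mp h).1.symm)
  -- the left inverse matrix
  set e := sigmaEquiv dd with he
  set W : Matrix (Fin (∑ ℓ, dd ℓ)) (Fin (∑ ℓ, dd ℓ)) ℝ :=
    Matrix.of (fun r k => (Q (e.symm r)).coeff (k : ℕ)) with hW
  have hWV : W * confVdm α dd = 1 := by
    ext r c
    rw [Matrix.mul_apply]
    have hc : sigmaToFin dd (e.symm c) = c := e.apply_symm_apply c
    have hstep : ∀ k : Fin (∑ ℓ, dd ℓ),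
        confVdm α dd k c = dcoef (k : ℕ) ((e.symm c).2 : ℕ) (α (e.symm c).1) := by
      intro k
      conv_lhs => rw [← hc]
      exact confVdm_apply α dd k (e.symm c)
    calc ∑ k, W r k * confVdm α dd k c
        = ∑ k : Fin (∑ ℓ, dd ℓ),
            (fun k : ℕ => (Q (e.symm r)).coeff k *
              dcoef k ((e.symm c).2 : ℕ) (α (e.symm c).1)) (k : ℕ) := by
          apply Finset.sum_congr rfl
          intro k _
          rw [hstep k]
          rfl
      _ = ∑ k ∈ Finset.range (∑ ℓ, dd ℓ), (Q (e.symm r)).coeff k *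
            dcoef k ((e.symm c).2 : ℕ) (α (e.symm c).1) :=
          Fin.sum_univ_eq_sum_range
            (fun k => (Q (e.symm r)).coeff k * dcoef k ((e.symm c).2 : ℕ) (α (e.symm c).1)) _
      _ = (1 : Matrix (Fin (∑ ℓ, dd ℓ)) (Fin (∑ ℓ, dd ℓ)) ℝ) r c := by
          rw [sum_coeff_dcoef _ _ (hQdeg _) _ _, htay (e.symm r) (e.symm c).1 (e.symm c).2,
            Matrix.one_apply, Sigma.eta]
          simp only [EmbeddingLike.apply_eq_iff_eq]
  have hinv : (confVdm α dd)⁻¹ = W := Matrix.inv_eq_left_inv hWV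
  rw [hinv]
  have hsymm : e.symm (sigmaToFin dd ⟨i, j⟩) = ⟨i, j⟩ := e.symm_apply_apply ⟨i, j⟩
  have hWval : W (sigmaToFin dd ⟨i, j⟩) ⟨(∑ ℓ, dd ℓ) - 1, by omega⟩ =
      (Q ⟨i, j⟩).coeff ((∑ ℓ, dd ℓ) - 1) := by
    rw [hW, Matrix.of_apply, hsymm]
  rw [hWval]
  -- now compute the top coefficient of Q ⟨i, j⟩
  have hN1 : 1 ≤ dd i := hdd i
  have hjN : (j : ℕ) < dd i := j.isLt
  have hd1 : (∑ ℓ, dd ℓ) - 1 = (fbar i).natDegree + (dd i - 1) := by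
    have := hfbardeg i
    omega
  have hgd : (g ⟨i, j⟩).natDegree ≤ dd i - 1 := by
    have h1 : (g ⟨i, j⟩).natDegree < dd i := hgdeg ⟨i, j⟩
    omega
  have hQij : Q ⟨i, j⟩ = fbar i * g ⟨i, j⟩ := rfl
  rw [hQij, hd1, coeff_mul_top (hfbarmon i) rfl hgd, ← taylor_coeff_top (α i) hgd]
  -- express the top Taylor coefficient of g via u
  obtain ⟨w, hw⟩ := hmodg ⟨i, j⟩
  have htg : Polynomial.taylor (α i) (g ⟨i, j⟩) =
      X ^ (j : ℕ) * Polynomial.taylor (α i) (u i) +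
        X ^ (dd i) * Polynomial.taylor (α i) w := by
    have h2 : g ⟨i, j⟩ = (X - C (α i)) ^ (j : ℕ) * u i + (X - C (α i)) ^ (dd i) * w := by
      linear_combination hw
    rw [h2, map_add, Polynomial.taylor_mul, Polynomial.taylor_mul, _root_.taylor_pow, _root_.taylor_pow,
      taylor_X_sub_C_self]
  rw [htg, Polynomial.coeff_add, mul_comm (X ^ (j : ℕ)), Polynomial.coeff_mul_X_pow',
    if_pos (by omega : (j : ℕ) ≤ dd i - 1), mul_comm (X ^ (dd i)), Polynomial.coeff_mul_X_pow',
    if_neg (by omega : ¬ dd i ≤ dd i - 1), add_zero]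
  -- identify with the iterated derivative
  have hfeval : (fbar i).eval (α i) ≠ 0 := by
    rw [hfbar, Polynomial.eval_prod]
    apply Finset.prod_ne_zero_iff.mpr
    intro ℓ hℓ
    have hne : ℓ ≠ i := (Finset.mem_erase.mp hℓ).1
    simp only [Polynomial.eval_pow, Polynomial.eval_sub, Polynomial.eval_X, Polynomial.eval_C]
    exact pow_ne_zero _ (sub_ne_zero.mpr fun h => hne (hα h.symm))
  have hfun : (fun x : ℝ => (∏ ℓ ∈ Finset.univ.erase i, (x - α ℓ) ^ (dd ℓ))⁻¹) =
      fun x : ℝ => ((fbar i).eval x)⁻¹ := by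
    funext x
    congr 1
    rw [hfbar, Polynomial.eval_prod]
    apply Finset.prod_congr rfl
    intro ℓ _
    simp
  rw [hfun, iteratedDeriv_inv_eval (fbar i) (u i) (α i) (dd i) hfeval (hdvd1 i)
    (dd i - 1 - (j : ℕ)) (by omega)]
  have hfac : (Polynomial.derivative ^[dd i - 1 - (j : ℕ)] (u i)) =
      (dd i - 1 - (j : ℕ)).factorial • Polynomial.hasseDeriv (dd i - 1 - (j : ℕ)) (u i) := by
    rw [← Polynomial.factorial_smul_hasseDeriv]
    rfl
  rw [hfac, nsmul_eq_mul, Polynomial.eval_mul, Polynomial.eval_natCast, ← mul_assoc,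
    inv_mul_cancel₀ (Nat.cast_ne_zero.mpr (dd i - 1 - (j : ℕ)).factorial_ne_zero), one_mul,
    ← Polynomial.taylor_coeff]
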